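/- arXiv:math/0311478 — 2 statements merged into one kernel-verified Lean document; each statement's English description precedes it below -/
import Mathlib

section
/- Let B' be a real symmetric (n+1)×(n+1) matrix and let B be its leading principal n×n submatrix (obtained by deleting the last row and the last column of B'). Then |Null B' − Null B| + |Sign B' − Sign B| = 1. (Lemma 3.1(b), stated for symmetrized Seifert matrices) -/
open Matrix Finset Module

noncomputable section AuxInterlace

variable {m : ℕ}

/-- The coordinate subspace of vectors supported on `s`. -/
def coordSub (s : Finset (Fin m)) : Submodule ℝ (Fin m → ℝ) where
  carrier := {y | ∀ i ∉ s, y i = 0}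
  add_mem' := fun {a b} ha hb i hi => by simp [ha i hi, hb i hi]
  zero_mem' := fun i _ => rfl
  smul_mem' := fun c y hy i hi => by simp [hy i hi]

lemma coordSub_eq_range (s : Finset (Fin m)) :
    coordSub s = LinearMap.range
      (Function.ExtendByZero.linearMap ℝ ((↑) : {i // i ∈ s} → Fin m)) := by
  ext y
  constructor
  · intro hy
    refine ⟨fun j => y j, funext fun i => ?_⟩
    by_cases h : i ∈ s
    · have := Subtype.val_injective.extend_apply
        (fun (j : {i // i ∈ s}) => y (j : Fin m)) (0 : Fin m → ℝ) ⟨i, h⟩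
      simpa using this
    · rw [Function.ExtendByZero.linearMap_apply, Function.extend_apply']
      · exact (hy i h).symm
      · rintro ⟨j, rfl⟩; exact h j.2
  · rintro ⟨f, rfl⟩ i hi
    rw [Function.ExtendByZero.linearMap_apply, Function.extend_apply']
    · rfl
    · rintro ⟨j, rfl⟩; exact hi j.2

lemma finrank_coordSub (s : Finset (Fin m)) : finrank ℝ (coordSub s) = s.card := by
  rw [coordSub_eq_range]
  have hinj : Function.Injective
      (Function.ExtendByZero.linearMap ℝ ((↑) : {i // i ∈ s} → Fin m)) := by
    intro a b hab
    funext j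
    have := congrFun hab (j : Fin m)
    simp only [Function.ExtendByZero.linearMap_apply] at this
    rwa [Subtype.val_injective.extend_apply, Subtype.val_injective.extend_apply] at this
  rw [LinearMap.finrank_range_of_inj hinj, Module.finrank_fintype_fun_eq_card,
    Fintype.card_coe]

variable {A : Matrix (Fin m) (Fin m) ℝ}

/-- The linear equivalence `x ↦ (star U) *ᵥ x` diagonalizing the quadratic form of `A`. -/
def diagEquiv (hA : A.IsHermitian) : (Fin m → ℝ) ≃ₗ[ℝ] (Fin m → ℝ) :=
  LinearEquiv.ofLinear
    (mulVecLin (star (hA.eigenvectorUnitary : Matrix (Fin m) (Fin m) ℝ)))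
    (mulVecLin (hA.eigenvectorUnitary : Matrix (Fin m) (Fin m) ℝ))
    (by rw [← mulVecLin_mul, (Matrix.mem_unitaryGroup_iff').mp hA.eigenvectorUnitary.2,
          mulVecLin_one])
    (by rw [← mulVecLin_mul, (Matrix.mem_unitaryGroup_iff).mp hA.eigenvectorUnitary.2,
          mulVecLin_one])

lemma quad_eq (hA : A.IsHermitian) (x : Fin m → ℝ) :
    x ⬝ᵥ A *ᵥ x = ∑ i, hA.eigenvalues i * (diagEquiv hA x i) ^ 2 := by
  set U : Matrix (Fin m) (Fin m) ℝ := (hA.eigenvectorUnitary : Matrix (Fin m) (Fin m) ℝ)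
  have hy : diagEquiv hA x = (star U) *ᵥ x := rfl
  conv_lhs => rw [hA.spectral_theorem, Unitary.conjStarAlgAut_apply]
  rw [← mulVec_mulVec, ← mulVec_mulVec, dotProduct_mulVec]
  have hv : x ᵥ* U = star U *ᵥ x := by
    funext i
    simp only [vecMul, mulVec, dotProduct, star_apply, Matrix.star_apply]
    exact Finset.sum_congr rfl fun j _ => by
      simp [mul_comm]
  rw [hv, ← hy]
  simp only [dotProduct, mulVec_diagonal, Function.comp_apply, RCLike.ofReal_real_eq_id, id_eq]
  exact Finset.sum_congr rfl fun i _ => by ring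

/-- The subspace spanned by eigenvectors with index in `s`. -/
def eigSub (hA : A.IsHermitian) (s : Finset (Fin m)) : Submodule ℝ (Fin m → ℝ) :=
  Submodule.comap (diagEquiv hA : (Fin m → ℝ) →ₗ[ℝ] (Fin m → ℝ)) (coordSub s)

lemma mem_eigSub {hA : A.IsHermitian} {s : Finset (Fin m)} {x : Fin m → ℝ} :
    x ∈ eigSub hA s ↔ ∀ i ∉ s, diagEquiv hA x i = 0 := Iff.rfl

lemma finrank_eigSub (hA : A.IsHermitian) (s : Finset (Fin m)) :
    finrank ℝ (eigSub hA s) = s.card := by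
  rw [eigSub, Submodule.comap_equiv_eq_map_symm, LinearEquiv.finrank_map_eq, finrank_coordSub]

lemma quad_pos_of {hA : A.IsHermitian} {s : Finset (Fin m)}
    (hs : ∀ i ∈ s, 0 < hA.eigenvalues i) {x : Fin m → ℝ}
    (hx : x ∈ eigSub hA s) (hx0 : x ≠ 0) : 0 < x ⬝ᵥ A *ᵥ x := by
  rw [quad_eq hA]
  have hy : diagEquiv hA x ≠ 0 := fun h => hx0 (by simpa using (diagEquiv hA).map_eq_zero_iff.mp h)
  obtain ⟨j, hj⟩ := Function.ne_iff.mp hy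
  have hjs : j ∈ s := by by_contra h; exact hj (mem_eigSub.mp hx j h)
  refine Finset.sum_pos' (fun i _ => ?_) ⟨j, Finset.mem_univ j, ?_⟩
  · by_cases h : i ∈ s
    · exact mul_nonneg (hs i h).le (sq_nonneg _)
    · rw [mem_eigSub.mp hx i h]; simp
  · exact mul_pos (hs j hjs) (pow_two_pos_of_ne_zero hj)

lemma quad_nonpos_of {hA : A.IsHermitian} {s : Finset (Fin m)}
    (hs : ∀ i ∈ s, hA.eigenvalues i ≤ 0) {x : Fin m → ℝ}
    (hx : x ∈ eigSub hA s) : x ⬝ᵥ A *ᵥ x ≤ 0 := by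
  rw [quad_eq hA]
  refine Finset.sum_nonpos fun i _ => ?_
  by_cases h : i ∈ s
  · exact mul_nonpos_of_nonpos_of_nonneg (hs i h) (sq_nonneg _)
  · rw [mem_eigSub.mp hx i h]; simp

lemma quad_neg_of {hA : A.IsHermitian} {s : Finset (Fin m)}
    (hs : ∀ i ∈ s, hA.eigenvalues i < 0) {x : Fin m → ℝ}
    (hx : x ∈ eigSub hA s) (hx0 : x ≠ 0) : x ⬝ᵥ A *ᵥ x < 0 := by
  rw [quad_eq hA]
  have hy : diagEquiv hA x ≠ 0 := fun h => hx0 (by simpa using (diagEquiv hA).map_eq_zero_iff.mp h)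
  obtain ⟨j, hj⟩ := Function.ne_iff.mp hy
  have hjs : j ∈ s := by by_contra h; exact hj (mem_eigSub.mp hx j h)
  refine Finset.sum_neg' (fun i _ => ?_) ⟨j, Finset.mem_univ j, ?_⟩
  · by_cases h : i ∈ s
    · exact mul_nonpos_of_nonpos_of_nonneg (hs i h).le (sq_nonneg _)
    · rw [mem_eigSub.mp hx i h]; simp
  · exact mul_neg_of_neg_of_pos (hs j hjs) (pow_two_pos_of_ne_zero hj)

lemma quad_nonneg_of {hA : A.IsHermitian} {s : Finset (Fin m)}
    (hs : ∀ i ∈ s, 0 ≤ hA.eigenvalues i) {x : Fin m → ℝ}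
    (hx : x ∈ eigSub hA s) : 0 ≤ x ⬝ᵥ A *ᵥ x := by
  rw [quad_eq hA]
  refine Finset.sum_nonneg fun i _ => ?_
  by_cases h : i ∈ s
  · exact mul_nonneg (hs i h) (sq_nonneg _)
  · rw [mem_eigSub.mp hx i h]; simp

/-- If two subspaces intersect trivially, the sum of their dimensions is at most `m`. -/
lemma finrank_add_le_of {W V : Submodule ℝ (Fin m → ℝ)}
    (h : ∀ x, x ∈ W → x ∈ V → x = 0) : finrank ℝ W + finrank ℝ V ≤ m := by
  have hbot : W ⊓ V = ⊥ := by
    rw [eq_bot_iff]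
    rintro x ⟨hxW, hxV⟩
    exact h x hxW hxV
  have := Submodule.finrank_sup_add_finrank_inf_eq W V
  rw [hbot, finrank_bot, add_zero] at this
  rw [← this]
  simpa [Module.finrank_fintype_fun_eq_card] using Submodule.finrank_le (W ⊔ V)

variable {n : ℕ}

/-- Extension by zero along `Fin.castSucc`. -/
def Emap (n : ℕ) : (Fin n → ℝ) →ₗ[ℝ] (Fin (n + 1) → ℝ) :=
  Function.ExtendByZero.linearMap ℝ Fin.castSucc

lemma Emap_castSucc (x : Fin n → ℝ) (i : Fin n) : Emap n x i.castSucc = x i :=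
  (Fin.castSucc_injective n).extend_apply x 0 i

lemma Emap_last (x : Fin n → ℝ) : Emap n x (Fin.last n) = 0 := by
  rw [Emap, Function.ExtendByZero.linearMap_apply, Function.extend_apply']
  · rfl
  · rintro ⟨i, hi⟩
    exact (Fin.castSucc_lt_last i).ne hi

lemma Emap_injective : Function.Injective (Emap n) := by
  intro a b hab
  funext i
  have := congrFun hab i.castSucc
  rwa [Emap_castSucc, Emap_castSucc] at this

lemma quad_embed (B' : Matrix (Fin (n + 1)) (Fin (n + 1)) ℝ) (x : Fin n → ℝ) :
    Emap n x ⬝ᵥ B' *ᵥ Emap n x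
      = x ⬝ᵥ (B'.submatrix Fin.castSucc Fin.castSucc) *ᵥ x := by
  simp only [dotProduct, mulVec, Fin.sum_univ_castSucc, Emap_castSucc, Emap_last,
    submatrix_apply, zero_mul, mul_zero, add_zero, Finset.sum_const_zero, dotProduct]

end AuxInterlace

open scoped Classical in
/-- The signature of a real symmetric matrix: the number of positive eigenvalues minus the
number of negative eigenvalues, counted with multiplicity. -/
noncomputable def matSign {n : ℕ} {A : Matrix (Fin n) (Fin n) ℝ} (hA : A.IsHermitian) : ℤ :=
  ((Finset.univ.filter fun i => 0 < hA.eigenvalues i).card : ℤ)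
    - ((Finset.univ.filter fun i => hA.eigenvalues i < 0).card : ℤ)

open scoped Classical in
/-- The nullity of a real symmetric matrix: the multiplicity of `0` as an eigenvalue. -/
noncomputable def matNull {n : ℕ} {A : Matrix (Fin n) (Fin n) ℝ} (hA : A.IsHermitian) : ℤ :=
  ((Finset.univ.filter fun i => hA.eigenvalues i = 0).card : ℤ)

open scoped Classical in
/-- positive, negative and zero eigenvalue counts sum to the size. -/
lemma count_partition {m : ℕ} {A : Matrix (Fin m) (Fin m) ℝ} (hA : A.IsHermitian) :
    (Finset.univ.filter fun i => 0 < hA.eigenvalues i).card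
      + (Finset.univ.filter fun i => hA.eigenvalues i < 0).card
      + (Finset.univ.filter fun i => hA.eigenvalues i = 0).card = m := by
  classical
  have hU : (Finset.univ.filter fun i => 0 < hA.eigenvalues i)
      ∪ ((Finset.univ.filter fun i => hA.eigenvalues i < 0)
        ∪ (Finset.univ.filter fun i => hA.eigenvalues i = 0)) = Finset.univ := by
    ext i
    simp only [Finset.mem_union, Finset.mem_filter, Finset.mem_univ, true_and, iff_true]
    rcases lt_trichotomy (hA.eigenvalues i) 0 with h | h | h
    · exact Or.inr (Or.inl h)
    · exact Or.inr (Or.inr h)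
    · exact Or.inl h
  have hd1 : Disjoint (Finset.univ.filter fun i => hA.eigenvalues i < 0)
      (Finset.univ.filter fun i => hA.eigenvalues i = 0) := by
    rw [Finset.disjoint_left]
    intro a ha hb
    simp only [Finset.mem_filter] at ha hb
    exact absurd hb.2 ha.2.ne
  have hd2 : Disjoint (Finset.univ.filter fun i => 0 < hA.eigenvalues i)
      ((Finset.univ.filter fun i => hA.eigenvalues i < 0)
        ∪ (Finset.univ.filter fun i => hA.eigenvalues i = 0)) := by
    rw [Finset.disjoint_left]
    intro a ha hb
    simp only [Finset.mem_filter, Finset.mem_union] at ha hb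
    rcases hb with hb | hb
    · exact absurd ha.2 hb.2.asymm
    · exact absurd hb.2 ha.2.ne'
  calc (Finset.univ.filter fun i => 0 < hA.eigenvalues i).card
      + (Finset.univ.filter fun i => hA.eigenvalues i < 0).card
      + (Finset.univ.filter fun i => hA.eigenvalues i = 0).card
      = ((Finset.univ.filter fun i => 0 < hA.eigenvalues i)
        ∪ ((Finset.univ.filter fun i => hA.eigenvalues i < 0)
          ∪ (Finset.univ.filter fun i => hA.eigenvalues i = 0))).card := by
        rw [Finset.card_union_of_disjoint hd2, Finset.card_union_of_disjoint hd1, add_assoc]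
    _ = m := by rw [hU, Finset.card_univ, Fintype.card_fin]

open scoped Classical in
/-- Lemma 3.1(b): if `B` is the leading principal `n × n` submatrix of a real symmetric
`(n + 1) × (n + 1)` matrix `B'`, then `|Null B' - Null B| + |Sign B' - Sign B| = 1`. -/
theorem null_sign_principal_submatrix (n : ℕ)
    (B' : Matrix (Fin (n + 1)) (Fin (n + 1)) ℝ) (hB' : B'.IsHermitian)
    (hB : (B'.submatrix Fin.castSucc Fin.castSucc).IsHermitian) :
    (matNull hB' - matNull hB).natAbs + (matSign hB' - matSign hB).natAbs = 1 := by
  classical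
  set p' := (Finset.univ.filter fun i => 0 < hB'.eigenvalues i).card with hp'
  set q' := (Finset.univ.filter fun i => hB'.eigenvalues i < 0).card with hq'
  set z' := (Finset.univ.filter fun i => hB'.eigenvalues i = 0).card with hz'
  set p := (Finset.univ.filter fun i => 0 < hB.eigenvalues i).card with hp
  set q := (Finset.univ.filter fun i => hB.eigenvalues i < 0).card with hq
  set z := (Finset.univ.filter fun i => hB.eigenvalues i = 0).card with hz
  have hpart' : p' + q' + z' = n + 1 := count_partition hB'
  have hpart : p + q + z = n := count_partition hB
  -- (a) p ≤ p'
  have ha : p ≤ p' := by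
    have key : finrank ℝ (Submodule.map (Emap n)
          (eigSub hB (Finset.univ.filter fun i => 0 < hB.eigenvalues i)))
        + finrank ℝ (eigSub hB' (Finset.univ.filter fun i => ¬ 0 < hB'.eigenvalues i))
        ≤ n + 1 := by
      apply finrank_add_le_of
      rintro x hxW hxV
      by_contra hx0
      obtain ⟨x₀, hx₀, rfl⟩ := hxW
      have hx₀0 : x₀ ≠ 0 := fun h => hx0 (by rw [h, map_zero])
      have hpos : 0 < x₀ ⬝ᵥ (B'.submatrix Fin.castSucc Fin.castSucc) *ᵥ x₀ :=
        quad_pos_of (fun i hi => (Finset.mem_filter.mp hi).2) hx₀ hx₀0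
      have hnonpos : Emap n x₀ ⬝ᵥ B' *ᵥ Emap n x₀ ≤ 0 :=
        quad_nonpos_of (fun i hi => not_lt.mp (Finset.mem_filter.mp hi).2) hxV
      rw [quad_embed] at hnonpos
      linarith
    rw [← (Submodule.equivMapOfInjective _ Emap_injective _).finrank_eq,
      finrank_eigSub, finrank_eigSub] at key
    have hc : p' + (Finset.univ.filter fun i => ¬ 0 < hB'.eigenvalues i).card = n + 1 := by
      rw [hp', Finset.card_filter_add_card_filter_not, Finset.card_univ,
        Fintype.card_fin]
    omega
  -- (b) p' ≤ p + 1
  have hb : p' ≤ p + 1 := by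
    have key : finrank ℝ (eigSub hB' (Finset.univ.filter fun i => 0 < hB'.eigenvalues i))
        + finrank ℝ (Submodule.map (Emap n)
          (eigSub hB (Finset.univ.filter fun i => ¬ 0 < hB.eigenvalues i)))
        ≤ n + 1 := by
      apply finrank_add_le_of
      rintro x hxW hxV
      by_contra hx0
      obtain ⟨x₀, hx₀, rfl⟩ := hxV
      have hpos : 0 < Emap n x₀ ⬝ᵥ B' *ᵥ Emap n x₀ :=
        quad_pos_of (fun i hi => (Finset.mem_filter.mp hi).2) hxW hx0
      have hnonpos : x₀ ⬝ᵥ (B'.submatrix Fin.castSucc Fin.castSucc) *ᵥ x₀ ≤ 0 :=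
        quad_nonpos_of (fun i hi => not_lt.mp (Finset.mem_filter.mp hi).2) hx₀
      rw [quad_embed] at hpos
      linarith
    rw [← (Submodule.equivMapOfInjective _ Emap_injective _).finrank_eq,
      finrank_eigSub, finrank_eigSub] at key
    have hc : p + (Finset.univ.filter fun i => ¬ 0 < hB.eigenvalues i).card = n := by
      rw [hp, Finset.card_filter_add_card_filter_not, Finset.card_univ,
        Fintype.card_fin]
    omega
  -- (c) q ≤ q'
  have hc : q ≤ q' := by
    have key : finrank ℝ (Submodule.map (Emap n)
          (eigSub hB (Finset.univ.filter fun i => hB.eigenvalues i < 0)))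
        + finrank ℝ (eigSub hB' (Finset.univ.filter fun i => ¬ hB'.eigenvalues i < 0))
        ≤ n + 1 := by
      apply finrank_add_le_of
      rintro x hxW hxV
      by_contra hx0
      obtain ⟨x₀, hx₀, rfl⟩ := hxW
      have hx₀0 : x₀ ≠ 0 := fun h => hx0 (by rw [h, map_zero])
      have hneg : x₀ ⬝ᵥ (B'.submatrix Fin.castSucc Fin.castSucc) *ᵥ x₀ < 0 :=
        quad_neg_of (fun i hi => (Finset.mem_filter.mp hi).2) hx₀ hx₀0
      have hnonneg : 0 ≤ Emap n x₀ ⬝ᵥ B' *ᵥ Emap n x₀ :=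
        quad_nonneg_of (fun i hi => not_lt.mp (Finset.mem_filter.mp hi).2) hxV
      rw [quad_embed] at hnonneg
      linarith
    rw [← (Submodule.equivMapOfInjective _ Emap_injective _).finrank_eq,
      finrank_eigSub, finrank_eigSub] at key
    have hcc : q' + (Finset.univ.filter fun i => ¬ hB'.eigenvalues i < 0).card = n + 1 := by
      rw [hq', Finset.card_filter_add_card_filter_not, Finset.card_univ,
        Fintype.card_fin]
    omega
  -- (d) q' ≤ q + 1
  have hd : q' ≤ q + 1 := by
    have key : finrank ℝ (eigSub hB' (Finset.univ.filter fun i => hB'.eigenvalues i < 0))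
        + finrank ℝ (Submodule.map (Emap n)
          (eigSub hB (Finset.univ.filter fun i => ¬ hB.eigenvalues i < 0)))
        ≤ n + 1 := by
      apply finrank_add_le_of
      rintro x hxW hxV
      by_contra hx0
      obtain ⟨x₀, hx₀, rfl⟩ := hxV
      have hneg : Emap n x₀ ⬝ᵥ B' *ᵥ Emap n x₀ < 0 :=
        quad_neg_of (fun i hi => (Finset.mem_filter.mp hi).2) hxW hx0
      have hnonneg : 0 ≤ x₀ ⬝ᵥ (B'.submatrix Fin.castSucc Fin.castSucc) *ᵥ x₀ :=
        quad_nonneg_of (fun i hi => not_lt.mp (Finset.mem_filter.mp hi).2) hx₀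
      rw [quad_embed] at hneg
      linarith
    rw [← (Submodule.equivMapOfInjective _ Emap_injective _).finrank_eq,
      finrank_eigSub, finrank_eigSub] at key
    have hcc : q + (Finset.univ.filter fun i => ¬ hB.eigenvalues i < 0).card = n := by
      rw [hq, Finset.card_filter_add_card_filter_not, Finset.card_univ,
        Fintype.card_fin]
    omega
  -- conclude
  unfold matNull matSign
  rw [← hp', ← hq', ← hz', ← hp, ← hq, ← hz]
  omega
end

section
/- Let B be a real symmetric n×n matrix and let B' and B'' be real symmetric (n+1)×(n+1) matrices, each having B as its leading principal n×n submatrix. If det B' and det B'' are both nonzero and have the same sign, then Sign B' = Sign B''. (Corollary 3.2, stated for symmetrized Seifert matrices) -/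
open Matrix

/-- Congruence of square matrices. -/
def MCong {m : Type*} [Fintype m] [DecidableEq m] (A B : Matrix m m ℝ) : Prop :=
  ∃ C : Matrix m m ℝ, IsUnit C ∧ B = Cᵀ * A * C

namespace MCong

variable {m : Type*} [Fintype m] [DecidableEq m] {A B D : Matrix m m ℝ}

theorem refl (A : Matrix m m ℝ) : MCong A A :=
  ⟨1, isUnit_one, by simp⟩

theorem symm (h : MCong A B) : MCong B A := by
  obtain ⟨C, hC, rfl⟩ := h
  have hdet : IsUnit C.det := (Matrix.isUnit_iff_isUnit_det C).mp hC
  have h1 : C * C⁻¹ = 1 := Matrix.mul_nonsing_inv C hdet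
  have h2 : C⁻¹ * C = 1 := Matrix.nonsing_inv_mul C hdet
  refine ⟨C⁻¹, Matrix.isUnit_nonsing_inv_iff.mpr hC, ?_⟩
  calc A = (C * C⁻¹)ᵀ * A * (C * C⁻¹) := by rw [h1]; simp
    _ = (C⁻¹)ᵀ * (Cᵀ * A * C) * C⁻¹ := by
        simp only [Matrix.transpose_mul]; noncomm_ring

theorem trans (h1 : MCong A B) (h2 : MCong B D) : MCong A D := by
  obtain ⟨C, hC, rfl⟩ := h1
  obtain ⟨C', hC', rfl⟩ := h2
  exact ⟨C * C', hC.mul hC', by simp only [Matrix.transpose_mul]; noncomm_ring⟩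

end MCong

open scoped Classical in
/-- Core of Sylvester's law of inertia: the positive count is monotone under congruence
of diagonal matrices. -/
theorem posCount_le_of_diag_cong {m : ℕ} {d e : Fin m → ℝ} {C : Matrix (Fin m) (Fin m) ℝ}
    (hC : IsUnit C) (h : Matrix.diagonal e = Cᵀ * Matrix.diagonal d * C) :
    (Finset.univ.filter fun i => 0 < e i).card ≤ (Finset.univ.filter fun i => 0 < d i).card := by
  classical
  -- the linear map
  set L : ({i : Fin m // 0 < e i} → ℝ) →ₗ[ℝ] ({j : Fin m // 0 < d j} → ℝ) :=
    (LinearMap.funLeft ℝ ℝ (Subtype.val : {j : Fin m // 0 < d j} → Fin m)) ∘ₗ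
      C.mulVecLin ∘ₗ Function.ExtendByZero.linearMap ℝ
        (Subtype.val : {i : Fin m // 0 < e i} → Fin m) with hL
  have hinj : Function.Injective L := by
    rw [← LinearMap.ker_eq_bot]
    rw [LinearMap.ker_eq_bot']
    intro x hx
    set v : Fin m → ℝ := Function.extend Subtype.val x 0 with hv
    set w : Fin m → ℝ := C *ᵥ v with hw
    have hveq : ∀ i (h : 0 < e i), v i = x ⟨i, h⟩ := fun i h => by
      rw [hv, ← Subtype.val_injective.extend_apply x 0 ⟨i, h⟩]
    have hv0 : ∀ i, ¬ 0 < e i → v i = 0 := by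
      intro i hi
      rw [hv, Function.extend_apply']
      · rfl
      · rintro ⟨⟨j, hj⟩, rfl⟩; exact hi hj
    have hw0 : ∀ j, 0 < d j → w j = 0 := by
      intro j hj
      have := congrFun hx ⟨j, hj⟩
      simp [hL, hw, hv] at this ⊢; exact this
    -- the quadratic form computation
    have key : v ⬝ᵥ (Matrix.diagonal e) *ᵥ v = w ⬝ᵥ (Matrix.diagonal d) *ᵥ w := by
      rw [h, hw]
      rw [Matrix.mul_assoc, ← Matrix.mulVec_mulVec]
      rw [Matrix.dotProduct_mulVec v Cᵀ _, Matrix.vecMul_transpose]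
      rw [← Matrix.mulVec_mulVec]
    have hrhs : w ⬝ᵥ (Matrix.diagonal d) *ᵥ w ≤ 0 := by
      rw [dotProduct]
      apply Finset.sum_nonpos
      intro j _
      rw [Matrix.mulVec_diagonal]
      by_cases hj : 0 < d j
      · rw [hw0 j hj]; simp
      · push_neg at hj
        have : d j * w j * w j ≤ 0 := by nlinarith [sq_nonneg (w j)]
        nlinarith [this]
    have hterm : ∀ i, 0 ≤ v i * ((Matrix.diagonal e) *ᵥ v) i := by
      intro i
      rw [Matrix.mulVec_diagonal]
      by_cases hi : 0 < e i
      · nlinarith [sq_nonneg (v i), le_of_lt hi]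
      · rw [hv0 i hi]; simp
    have hzero : ∀ i, v i * ((Matrix.diagonal e) *ᵥ v) i = 0 := by
      have hsum : ∑ i, v i * ((Matrix.diagonal e) *ᵥ v) i ≤ 0 := by
        rw [← dotProduct, key]; exact hrhs
      intro i
      have hge : (0:ℝ) ≤ ∑ i, v i * ((Matrix.diagonal e) *ᵥ v) i :=
        Finset.sum_nonneg (fun i _ => hterm i)
      have hs0 : ∑ i, v i * ((Matrix.diagonal e) *ᵥ v) i = 0 := le_antisymm hsum hge
      exact (Finset.sum_eq_zero_iff_of_nonneg (fun i _ => hterm i)).mp hs0 i (Finset.mem_univ i)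
    funext ⟨i, hi⟩
    have := hzero i
    rw [Matrix.mulVec_diagonal, hveq i hi] at this
    have : x ⟨i, hi⟩ = 0 := by
      rcases mul_eq_zero.mp this with hh | hh
      · exact hh
      · rcases mul_eq_zero.mp hh with h1 | h2
        · exact absurd h1 (ne_of_gt hi)
        · exact h2
    simpa using this
  have hcard := LinearMap.finrank_le_finrank_of_injective hinj
  rw [Module.finrank_pi, Module.finrank_pi] at hcard
  rwa [Fintype.card_subtype, Fintype.card_subtype] at hcard

theorem mcong_diagonal_eigenvalues {m : ℕ} {A : Matrix (Fin m) (Fin m) ℝ} (hA : A.IsHermitian) :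
    MCong A (Matrix.diagonal hA.eigenvalues) := by
  set U : Matrix (Fin m) (Fin m) ℝ :=
    (Matrix.IsHermitian.eigenvectorUnitary hA : Matrix (Fin m) (Fin m) ℝ) with hU
  have hkey : star (hA.eigenvectorUnitary : Matrix (Fin m) (Fin m) ℝ) * A *
      (hA.eigenvectorUnitary : Matrix (Fin m) (Fin m) ℝ) = diagonal (RCLike.ofReal ∘ hA.eigenvalues) := by
    have := hA.conjStarAlgAut_star_eigenvectorUnitary
    rwa [Unitary.conjStarAlgAut_star_apply] at this
  have hUt : Uᵀ = star U := by
    rw [Matrix.star_eq_conjTranspose, Matrix.conjTranspose_eq_transpose_of_trivial]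
  refine ⟨U, ?_, ?_⟩
  · exact (Unitary.toUnits (Matrix.IsHermitian.eigenvectorUnitary hA)).isUnit
  · rw [hUt, hU, hkey, RCLike.ofReal_real_eq_id, Function.id_comp]

open scoped Classical in
theorem matSign_eq_of_mcong {m : ℕ} {A₁ A₂ : Matrix (Fin m) (Fin m) ℝ}
    (h₁ : A₁.IsHermitian) (h₂ : A₂.IsHermitian) (h : MCong A₁ A₂) :
    matSign h₁ = matSign h₂ := by
  classical
  have hd : MCong (Matrix.diagonal h₁.eigenvalues) (Matrix.diagonal h₂.eigenvalues) :=
    MCong.trans (MCong.trans (MCong.symm (mcong_diagonal_eigenvalues h₁)) h) (mcong_diagonal_eigenvalues h₂)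
  obtain ⟨C', hC', hCe'⟩ := MCong.symm hd
  obtain ⟨C, hC, hCe⟩ := hd
  have hpos : (Finset.univ.filter fun i => 0 < h₁.eigenvalues i).card
      = (Finset.univ.filter fun i => 0 < h₂.eigenvalues i).card := by
    exact le_antisymm (posCount_le_of_diag_cong hC' hCe') (posCount_le_of_diag_cong hC hCe)
  have hCen : Matrix.diagonal (fun i => -h₂.eigenvalues i)
      = Cᵀ * Matrix.diagonal (fun i => -h₁.eigenvalues i) * C := by
    have : Matrix.diagonal (fun i => -h₂.eigenvalues i) = -Matrix.diagonal h₂.eigenvalues := by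
      rw [← Matrix.diagonal_neg]
    rw [this, hCe]
    have : Matrix.diagonal (fun i => -h₁.eigenvalues i) = -Matrix.diagonal h₁.eigenvalues := by
      rw [← Matrix.diagonal_neg]
    rw [this]
    noncomm_ring
  have hCen' : Matrix.diagonal (fun i => -h₁.eigenvalues i)
      = C'ᵀ * Matrix.diagonal (fun i => -h₂.eigenvalues i) * C' := by
    have e1 : Matrix.diagonal (fun i => -h₁.eigenvalues i) = -Matrix.diagonal h₁.eigenvalues := by
      rw [← Matrix.diagonal_neg]
    have e2 : Matrix.diagonal (fun i => -h₂.eigenvalues i) = -Matrix.diagonal h₂.eigenvalues := by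
      rw [← Matrix.diagonal_neg]
    rw [e1, e2, hCe']
    noncomm_ring
  have hneg : (Finset.univ.filter fun i => h₁.eigenvalues i < 0).card
      = (Finset.univ.filter fun i => h₂.eigenvalues i < 0).card := by
    have g1 := posCount_le_of_diag_cong hC' hCen'
    have g2 := posCount_le_of_diag_cong hC hCen
    simp only [neg_pos] at g1 g2
    exact le_antisymm g1 g2
  unfold matSign
  rw [hpos, hneg]

open Matrix

section Blocks

variable {n : ℕ}

theorem mcong_add (A : Matrix (Fin n) (Fin n) ℝ) (hA : Aᵀ = A)
    (V Z : Matrix (Fin n) (Fin 1) ℝ) (W : Matrix (Fin 1) (Fin 1) ℝ) :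
    MCong (Matrix.fromBlocks A V Vᵀ W)
      (Matrix.fromBlocks A (V + A*Z) (V + A*Z)ᵀ (W + Zᵀ*V + Vᵀ*Z + Zᵀ*A*Z)) := by
  refine ⟨Matrix.fromBlocks 1 Z 0 1, ?_, ?_⟩
  · rw [Matrix.isUnit_iff_isUnit_det, Matrix.det_fromBlocks_zero₂₁]
    simp
  · rw [Matrix.fromBlocks_transpose, Matrix.fromBlocks_multiply, Matrix.fromBlocks_multiply]
    rw [Matrix.transpose_add, Matrix.transpose_mul, hA]
    rw [Matrix.fromBlocks_inj]
    refine ⟨by simp, by simp [add_comm], by simp [add_comm], ?_⟩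
    simp only [Matrix.mul_add, Matrix.add_mul, Matrix.mul_assoc, Matrix.transpose_one,
      Matrix.one_mul, Matrix.mul_one]
    abel

theorem mcong_scale (A : Matrix (Fin n) (Fin n) ℝ)
    (V : Matrix (Fin n) (Fin 1) ℝ) (W : Matrix (Fin 1) (Fin 1) ℝ)
    (K : Matrix (Fin 1) (Fin 1) ℝ) (hK : IsUnit K) :
    MCong (Matrix.fromBlocks A V Vᵀ W)
      (Matrix.fromBlocks A (V*K) (V*K)ᵀ (Kᵀ*W*K)) := by
  refine ⟨Matrix.fromBlocks 1 0 0 K, ?_, ?_⟩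
  · rw [Matrix.isUnit_iff_isUnit_det, Matrix.det_fromBlocks_zero₂₁]
    simpa using (Matrix.isUnit_iff_isUnit_det K).mp hK
  · rw [Matrix.fromBlocks_transpose, Matrix.fromBlocks_multiply, Matrix.fromBlocks_multiply]
    rw [Matrix.transpose_mul]
    rw [Matrix.fromBlocks_inj]
    exact ⟨by simp, by simp, by simp, by simp [Matrix.mul_assoc]⟩

end Blocks

theorem MCong.submatrix_equiv {l m : Type*} [Fintype l] [DecidableEq l] [Fintype m]
    [DecidableEq m] (σ : l ≃ m) {M N : Matrix m m ℝ} (h : MCong M N) :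
    MCong (M.submatrix σ σ) (N.submatrix σ σ) := by
  obtain ⟨C, hC, rfl⟩ := h
  refine ⟨C.submatrix σ σ, ?_, ?_⟩
  · rw [Matrix.isUnit_iff_isUnit_det, Matrix.det_submatrix_equiv_self]
    exact (Matrix.isUnit_iff_isUnit_det C).mp hC
  · rw [Matrix.transpose_submatrix, Matrix.submatrix_mul_equiv, Matrix.submatrix_mul_equiv]

theorem MCong.det_sq {m : Type*} [Fintype m] [DecidableEq m] {M N : Matrix m m ℝ}
    (h : MCong M N) : ∃ c : ℝ, c ≠ 0 ∧ N.det = c^2 * M.det := by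
  obtain ⟨C, hC, rfl⟩ := h
  refine ⟨C.det, ?_, ?_⟩
  · exact IsUnit.ne_zero ((Matrix.isUnit_iff_isUnit_det C).mp hC)
  · rw [Matrix.det_mul, Matrix.det_mul, Matrix.det_transpose]; ring

/-- The invertible case: congruence to a "Schur form" with zero off-diagonal blocks. -/
theorem mcong_schur {n : ℕ} (A : Matrix (Fin n) (Fin n) ℝ) (hA : Aᵀ = A) (hAd : A.det ≠ 0)
    (V : Matrix (Fin n) (Fin 1) ℝ) (W : Matrix (Fin 1) (Fin 1) ℝ) :
    ∃ S : Matrix (Fin 1) (Fin 1) ℝ,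
      MCong (Matrix.fromBlocks A V Vᵀ W) (Matrix.fromBlocks A 0 0 S) := by
  have h := mcong_add A hA V (-(A⁻¹ * V)) W
  have hV0 : V + A * -(A⁻¹ * V) = 0 := by
    rw [Matrix.mul_neg, ← Matrix.mul_assoc, Matrix.mul_nonsing_inv A (isUnit_iff_ne_zero.mpr hAd),
      Matrix.one_mul]
    simp
  rw [hV0] at h
  rw [show (0 : Matrix (Fin n) (Fin 1) ℝ)ᵀ = (0 : Matrix (Fin 1) (Fin n) ℝ) from
    Matrix.transpose_zero] at h
  exact ⟨_, h⟩

/-- 1×1 scaling congruence. -/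
theorem mcong_corner_scale {n : ℕ} (A : Matrix (Fin n) (Fin n) ℝ)
    (V : Matrix (Fin n) (Fin 1) ℝ) (W : Matrix (Fin 1) (Fin 1) ℝ) (k : ℝ) (hk : k ≠ 0) :
    MCong (Matrix.fromBlocks A V Vᵀ W)
      (Matrix.fromBlocks A (k • V) (k • V)ᵀ ((k^2) • W)) := by
  have hK : IsUnit (Matrix.of (fun (_ _ : Fin 1) => k) : Matrix (Fin 1) (Fin 1) ℝ) := by
    rw [Matrix.isUnit_iff_isUnit_det, Matrix.det_fin_one]
    exact isUnit_iff_ne_zero.mpr hk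
  have h := mcong_scale A V W _ hK
  have h1 : V * (Matrix.of (fun (_ _ : Fin 1) => k) : Matrix (Fin 1) (Fin 1) ℝ) = k • V := by
    ext i j
    rw [Subsingleton.elim j 0]
    simp [Matrix.mul_apply, Fin.sum_univ_one, mul_comm]
  have h2 : (Matrix.of (fun (_ _ : Fin 1) => k) : Matrix (Fin 1) (Fin 1) ℝ)ᵀ * W *
      (Matrix.of (fun (_ _ : Fin 1) => k) : Matrix (Fin 1) (Fin 1) ℝ) = (k^2) • W := by
    ext i j
    rw [Subsingleton.elim i 0, Subsingleton.elim j 0]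
    simp [Matrix.mul_apply, Fin.sum_univ_one]
    ring
  rwa [h1, h2] at h

/-- Invertible case of the main block lemma. -/
theorem mcong_blocks_of_det_ne_zero {n : ℕ} (A : Matrix (Fin n) (Fin n) ℝ) (hA : Aᵀ = A)
    (hAd : A.det ≠ 0) (V' V'' : Matrix (Fin n) (Fin 1) ℝ) (W' W'' : Matrix (Fin 1) (Fin 1) ℝ)
    (hprod : 0 < (Matrix.fromBlocks A V' V'ᵀ W').det * (Matrix.fromBlocks A V'' V''ᵀ W'').det) :
    MCong (Matrix.fromBlocks A V' V'ᵀ W') (Matrix.fromBlocks A V'' V''ᵀ W'') := by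
  obtain ⟨S', hS'⟩ := mcong_schur A hA hAd V' W'
  obtain ⟨S'', hS''⟩ := mcong_schur A hA hAd V'' W''
  set s' := S' 0 0 with hs'def
  set s'' := S'' 0 0 with hs''def
  -- determinants
  have hdet' : (Matrix.fromBlocks A 0 (0 : Matrix (Fin 1) (Fin n) ℝ) S').det = A.det * s' := by
    rw [Matrix.det_fromBlocks_zero₂₁, Matrix.det_fin_one]
  have hdet'' : (Matrix.fromBlocks A 0 (0 : Matrix (Fin 1) (Fin n) ℝ) S'').det = A.det * s'' := by
    rw [Matrix.det_fromBlocks_zero₂₁, Matrix.det_fin_one]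
  obtain ⟨c', hc', hc'e⟩ := hS'.det_sq
  obtain ⟨c'', hc'', hc''e⟩ := hS''.det_sq
  have hss : 0 < s' * s'' := by
    rw [hdet'] at hc'e; rw [hdet''] at hc''e
    have key : A.det^2 * (s' * s'') =
        c'^2 * c''^2 * ((Matrix.fromBlocks A V' V'ᵀ W').det
          * (Matrix.fromBlocks A V'' V''ᵀ W'').det) := by
      linear_combination (A.det * s'') * hc'e + (c'^2 * (Matrix.fromBlocks A V' V'ᵀ W').det) * hc''e
    have hA2 : 0 < A.det^2 := by positivity
    have hrhs : 0 < c'^2 * c''^2 * ((Matrix.fromBlocks A V' V'ᵀ W').det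
        * (Matrix.fromBlocks A V'' V''ᵀ W'').det) := by
      have hcc : 0 < c'^2 * c''^2 := by positivity
      exact mul_pos hcc hprod
    rw [← key] at hrhs
    by_contra hcon
    push_neg at hcon
    nlinarith [hrhs, hA2]
  have hs'ne : s' ≠ 0 := by
    intro h0; rw [h0] at hss; simp at hss
  have hdivpos : 0 < s'' / s' := by
    rcases mul_pos_iff.mp hss with ⟨h1, h2⟩ | ⟨h1, h2⟩
    · exact div_pos h2 h1
    · exact div_pos_of_neg_of_neg h2 h1
  set k := Real.sqrt (s'' / s') with hk
  have hkpos : 0 < k := Real.sqrt_pos.mpr hdivpos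
  have hk2 : k^2 = s'' / s' := Real.sq_sqrt hdivpos.le
  have hscale := mcong_corner_scale A (0 : Matrix (Fin n) (Fin 1) ℝ) S' k hkpos.ne'
  rw [smul_zero] at hscale
  rw [show (0 : Matrix (Fin n) (Fin 1) ℝ)ᵀ = (0 : Matrix (Fin 1) (Fin n) ℝ) from
    Matrix.transpose_zero] at hscale
  have hSS : (k^2) • S' = S'' := by
    ext i j
    rw [Subsingleton.elim i 0, Subsingleton.elim j 0]
    rw [Matrix.smul_apply, ← hs'def, ← hs''def, hk2, smul_eq_mul]
    field_simp
  rw [hSS] at hscale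
  exact (hS'.trans hscale).trans hS''.symm

/-- Singular case: any nondegenerate bordering of a singular symmetric matrix is congruent to
the canonical "hyperbolic" bordering by a fixed kernel vector. -/
theorem mcong_blocks_of_det_zero {n : ℕ} (A : Matrix (Fin n) (Fin n) ℝ) (hA : Aᵀ = A)
    (V : Matrix (Fin n) (Fin 1) ℝ) (W : Matrix (Fin 1) (Fin 1) ℝ)
    (hd : (Matrix.fromBlocks A V Vᵀ W).det ≠ 0)
    (u : Fin n → ℝ) (hu : u ≠ 0) (hAu : A *ᵥ u = 0) :
    MCong (Matrix.fromBlocks A V Vᵀ W)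
      (Matrix.fromBlocks A (Matrix.of fun i (_ : Fin 1) => u i)
        (Matrix.of fun i (_ : Fin 1) => u i)ᵀ 0) := by
  classical
  set v : Fin n → ℝ := fun i => V i 0 with hvdef
  have huu : u ⬝ᵥ u ≠ 0 := fun h => hu (dotProduct_self_eq_zero.mp h)
  -- nonzero kernel vectors pair nontrivially with v
  have hvz : ∀ z : Fin n → ℝ, z ≠ 0 → A *ᵥ z = 0 → v ⬝ᵥ z ≠ 0 := by
    intro z hz hAz hvz0
    apply hd
    rw [← Matrix.exists_mulVec_eq_zero_iff]
    refine ⟨Sum.elim z 0, ?_, ?_⟩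
    · intro h0
      apply hz
      funext i
      exact congrFun h0 (Sum.inl i)
    · rw [Matrix.fromBlocks_mulVec]
      have h1 : Vᵀ *ᵥ z = 0 := by
        funext j
        rw [Subsingleton.elim j 0]
        simpa [Matrix.mulVec, dotProduct, Matrix.transpose_apply, mul_comm] using hvz0
      simp [hAz, h1]
  -- the kernel of A has dimension 1
  have huK : u ∈ LinearMap.ker A.mulVecLin := by
    rw [LinearMap.mem_ker, Matrix.mulVecLin_apply, hAu]
  -- the dot-product-with-v functional
  let f : (Fin n → ℝ) →ₗ[ℝ] ℝ :=
    { toFun := fun x => v ⬝ᵥ x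
      map_add' := fun x y => dotProduct_add v x y
      map_smul' := fun r x => dotProduct_smul r v x }
  have hKle : Module.finrank ℝ (LinearMap.ker A.mulVecLin) ≤ 1 := by
    have hinj : Function.Injective (f.domRestrict (LinearMap.ker A.mulVecLin)) := by
      rw [← LinearMap.ker_eq_bot, LinearMap.ker_eq_bot']
      intro z hz
      by_contra hzne
      have hz0 : (z : Fin n → ℝ) ≠ 0 := fun h => hzne (Subtype.ext h)
      have hAz : A *ᵥ (z : Fin n → ℝ) = 0 := z.2
      exact hvz z hz0 hAz hz
    have := LinearMap.finrank_le_finrank_of_injective hinj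
    rwa [Module.finrank_self] at this
  have hKpos : 0 < Module.finrank ℝ (LinearMap.ker A.mulVecLin) := by
    rw [Module.finrank_pos_iff]
    exact ⟨⟨u, huK⟩, 0, fun h => hu (by simpa using congrArg Subtype.val h)⟩
  have hK1 : Module.finrank ℝ (LinearMap.ker A.mulVecLin) = 1 := le_antisymm hKle hKpos
  -- the dot-product-with-u functional and its kernel
  let g : (Fin n → ℝ) →ₗ[ℝ] ℝ :=
    { toFun := fun x => x ⬝ᵥ u
      map_add' := fun x y => add_dotProduct x y u
      map_smul' := fun r x => smul_dotProduct r x u }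
  have hgsurj : Function.Surjective g := by
    intro r
    refine ⟨(r / (u ⬝ᵥ u)) • u, ?_⟩
    show ((r / (u ⬝ᵥ u)) • u) ⬝ᵥ u = r
    rw [smul_dotProduct, smul_eq_mul, div_mul_cancel₀ _ huu]
  have hgker : Module.finrank ℝ (LinearMap.ker g) + 1 = n := by
    have := LinearMap.finrank_range_add_finrank_ker g
    rw [LinearMap.range_eq_top.mpr hgsurj, finrank_top, Module.finrank_self,
      Module.finrank_pi, Fintype.card_fin] at this
    omega
  have hrange : Module.finrank ℝ (LinearMap.range A.mulVecLin) + 1 = n := by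
    have := LinearMap.finrank_range_add_finrank_ker A.mulVecLin
    rw [hK1, Module.finrank_pi, Fintype.card_fin] at this
    exact this
  have hsub : LinearMap.range A.mulVecLin ≤ LinearMap.ker g := by
    rintro x ⟨y, rfl⟩
    rw [LinearMap.mem_ker]
    show (A.mulVecLin y) ⬝ᵥ u = 0
    rw [Matrix.mulVecLin_apply, dotProduct_comm, Matrix.dotProduct_mulVec]
    have : u ᵥ* A = 0 := by
      conv_lhs => rw [← hA]
      rw [Matrix.vecMul_transpose, hAu]
    rw [this, zero_dotProduct]
  have heq : LinearMap.range A.mulVecLin = LinearMap.ker g :=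
    Submodule.eq_of_le_of_finrank_le hsub (by omega)
  -- decompose v
  set α : ℝ := (v ⬝ᵥ u) / (u ⬝ᵥ u) with hαdef
  have hvu : v ⬝ᵥ u ≠ 0 := hvz u hu hAu
  have hα : α ≠ 0 := div_ne_zero hvu huu
  have hxk : v - α • u ∈ LinearMap.ker g := by
    rw [LinearMap.mem_ker]
    show (v - α • u) ⬝ᵥ u = 0
    rw [sub_dotProduct, smul_dotProduct, smul_eq_mul, hαdef,
      div_mul_cancel₀ _ huu, sub_self]
  obtain ⟨y, hy⟩ : ∃ y, A *ᵥ y = v - α • u := by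
    rw [← heq] at hxk
    obtain ⟨y, hy⟩ := hxk
    exact ⟨y, by rwa [Matrix.mulVecLin_apply] at hy⟩
  -- Step 1: change the bordering column to α • u
  set Z₁ : Matrix (Fin n) (Fin 1) ℝ := Matrix.of (fun i (_ : Fin 1) => -y i) with hZ₁
  have h1 := mcong_add A hA V Z₁ W
  set U₁ : Matrix (Fin n) (Fin 1) ℝ := Matrix.of (fun i (_ : Fin 1) => α * u i) with hU₁
  have hV1 : V + A * Z₁ = U₁ := by
    ext i j
    rw [Subsingleton.elim j 0]
    have hyi : ∑ k, A i k * y k = v i - α * u i := by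
      simpa [Matrix.mulVec, dotProduct] using congrFun hy i
    simp only [Matrix.add_apply, Matrix.mul_apply, hZ₁, hU₁, Matrix.of_apply, mul_neg,
      Finset.sum_neg_distrib]
    rw [hyi]
    show V i 0 - (v i - α * u i) = α * u i
    rw [hvdef]
    ring
  rw [hV1] at h1
  set W₁ : Matrix (Fin 1) (Fin 1) ℝ := W + Z₁ᵀ * V + Vᵀ * Z₁ + Z₁ᵀ * A * Z₁ with hW₁
  -- Step 2: clear the corner
  set β : ℝ := -(W₁ 0 0) / (2 * α * (u ⬝ᵥ u)) with hβdef
  set Z₂ : Matrix (Fin n) (Fin 1) ℝ := Matrix.of (fun i (_ : Fin 1) => β * u i) with hZ₂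
  have h2 := mcong_add A hA U₁ Z₂ W₁
  have hAZ₂ : A * Z₂ = 0 := by
    ext i j
    rw [Subsingleton.elim j 0]
    have hAui : ∑ k, A i k * u k = 0 := by
      simpa [Matrix.mulVec, dotProduct] using congrFun hAu i
    simp only [Matrix.mul_apply, hZ₂, Matrix.of_apply, Matrix.zero_apply]
    calc ∑ k, A i k * (β * u k) = β * ∑ k, A i k * u k := by
          rw [Finset.mul_sum]; exact Finset.sum_congr rfl fun k _ => by ring
      _ = 0 := by rw [hAui, mul_zero]
  rw [hAZ₂, add_zero] at h2
  have hW2 : W₁ + Z₂ᵀ * U₁ + U₁ᵀ * Z₂ + Z₂ᵀ * A * Z₂ = 0 := by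
    have hZAZ : Z₂ᵀ * A * Z₂ = 0 := by rw [Matrix.mul_assoc, hAZ₂, Matrix.mul_zero]
    ext i j
    rw [Subsingleton.elim i 0, Subsingleton.elim j 0, hZAZ]
    simp only [Matrix.add_apply, Matrix.mul_apply, Matrix.transpose_apply, hZ₂, hU₁,
      Matrix.of_apply, Matrix.zero_apply, add_zero]
    have hs1 : ∑ k, (β * u k) * (α * u k) = β * α * (u ⬝ᵥ u) := by
      rw [dotProduct, Finset.mul_sum]
      exact Finset.sum_congr rfl fun k _ => by ring
    have hs2 : ∑ k, (α * u k) * (β * u k) = β * α * (u ⬝ᵥ u) := by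
      rw [dotProduct, Finset.mul_sum]
      exact Finset.sum_congr rfl fun k _ => by ring
    rw [hs1, hs2]
    rw [hβdef]
    field_simp
    ring
  rw [hW2] at h2
  -- Step 3: rescale
  have h3 := mcong_corner_scale A U₁ 0 α⁻¹ (inv_ne_zero hα)
  simp only [smul_zero, Matrix.transpose_zero] at h3
  have hU : α⁻¹ • U₁ = Matrix.of (fun i (_ : Fin 1) => u i) := by
    ext i j
    simp only [Matrix.smul_apply, hU₁, Matrix.of_apply, smul_eq_mul]
    field_simp
  rw [hU] at h3
  exact (h1.trans h2).trans h3

theorem mcong_blocks_main {n : ℕ} (A : Matrix (Fin n) (Fin n) ℝ) (hA : Aᵀ = A)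
    (V' V'' : Matrix (Fin n) (Fin 1) ℝ) (W' W'' : Matrix (Fin 1) (Fin 1) ℝ)
    (hd' : (Matrix.fromBlocks A V' V'ᵀ W').det ≠ 0)
    (hd'' : (Matrix.fromBlocks A V'' V''ᵀ W'').det ≠ 0)
    (hprod : 0 < (Matrix.fromBlocks A V' V'ᵀ W').det * (Matrix.fromBlocks A V'' V''ᵀ W'').det) :
    MCong (Matrix.fromBlocks A V' V'ᵀ W') (Matrix.fromBlocks A V'' V''ᵀ W'') := by
  by_cases hAd : A.det = 0
  · obtain ⟨u, hu, hAu⟩ := (Matrix.exists_mulVec_eq_zero_iff).mpr hAd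
    exact (mcong_blocks_of_det_zero A hA V' W' hd' u hu hAu).trans
      (mcong_blocks_of_det_zero A hA V'' W'' hd'' u hu hAu).symm
  · exact mcong_blocks_of_det_ne_zero A hA hAd V' V'' W' W'' hprod

/-- Corollary 3.2: if two real symmetric `(n+1) × (n+1)` matrices `B'` and `B''` have the
same real symmetric matrix `B` as their leading principal `n × n` submatrix and their
determinants are nonzero and of the same sign, then `Sign B' = Sign B''`. -/
theorem sign_eq_of_same_principal_submatrix (n : ℕ)
    (B : Matrix (Fin n) (Fin n) ℝ) (hB : B.IsHermitian)
    (B' B'' : Matrix (Fin (n + 1)) (Fin (n + 1)) ℝ)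
    (hB' : B'.IsHermitian) (hB'' : B''.IsHermitian)
    (h' : B'.submatrix Fin.castSucc Fin.castSucc = B)
    (h'' : B''.submatrix Fin.castSucc Fin.castSucc = B)
    (hd' : B'.det ≠ 0) (hd'' : B''.det ≠ 0)
    (hs : Real.sign B'.det = Real.sign B''.det) :
    matSign hB' = matSign hB'' := by
  classical
  have hBt : Bᵀ = B := by
    rw [← Matrix.conjTranspose_eq_transpose_of_trivial]; exact hB
  have hB't : B'ᵀ = B' := by
    rw [← Matrix.conjTranspose_eq_transpose_of_trivial]; exact hB'
  have hB''t : B''ᵀ = B'' := by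
    rw [← Matrix.conjTranspose_eq_transpose_of_trivial]; exact hB''
  set e : Fin n ⊕ Fin 1 ≃ Fin (n + 1) := finSumFinEquiv with he
  set M' := B'.submatrix e e with hM'
  set M'' := B''.submatrix e e with hM''
  have hblocks : ∀ (X : Matrix (Fin (n+1)) (Fin (n+1)) ℝ), Xᵀ = X →
      X.submatrix Fin.castSucc Fin.castSucc = B →
      X.submatrix e e = Matrix.fromBlocks B ((X.submatrix e e).toBlocks₁₂)
        ((X.submatrix e e).toBlocks₁₂)ᵀ ((X.submatrix e e).toBlocks₂₂) := by
    intro X hXt hXB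
    set M := X.submatrix e e with hM
    have h11 : M.toBlocks₁₁ = B := by
      ext i j
      show M (Sum.inl i) (Sum.inl j) = B i j
      rw [← hXB]
      show X (e (Sum.inl i)) (e (Sum.inl j)) = X i.castSucc j.castSucc
      rw [he]
      simp [finSumFinEquiv_apply_left, Fin.castSucc, Fin.castAdd]
    have hMs : Mᵀ = M := by
      rw [hM, Matrix.transpose_submatrix, hXt]
    have h21 : M.toBlocks₂₁ = (M.toBlocks₁₂)ᵀ := by
      ext j i
      show M (Sum.inr j) (Sum.inl i) = M (Sum.inl i) (Sum.inr j)
      conv_lhs => rw [← hMs]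
      rfl
    calc M = Matrix.fromBlocks M.toBlocks₁₁ M.toBlocks₁₂ M.toBlocks₂₁ M.toBlocks₂₂ :=
          (Matrix.fromBlocks_toBlocks M).symm
      _ = _ := by rw [h11, h21]
  have hM'b := hblocks B' hB't h'
  have hM''b := hblocks B'' hB''t h''
  rw [← hM'] at hM'b
  rw [← hM''] at hM''b
  have hdetM' : M'.det = B'.det := by rw [hM', Matrix.det_submatrix_equiv_self]
  have hdetM'' : M''.det = B''.det := by rw [hM'', Matrix.det_submatrix_equiv_self]
  have hprod : 0 < B'.det * B''.det := by
    rcases lt_trichotomy B'.det 0 with h1 | h1 | h1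
    · rcases lt_trichotomy B''.det 0 with h2 | h2 | h2
      · exact mul_pos_of_neg_of_neg h1 h2
      · exact absurd h2 hd''
      · rw [Real.sign_of_neg h1, Real.sign_of_pos h2] at hs; norm_num at hs
    · exact absurd h1 hd'
    · rcases lt_trichotomy B''.det 0 with h2 | h2 | h2
      · rw [Real.sign_of_pos h1, Real.sign_of_neg h2] at hs; norm_num at hs
      · exact absurd h2 hd''
      · exact mul_pos h1 h2
  have hmc : MCong M' M'' := by
    rw [hM'b, hM''b]
    apply mcong_blocks_main B hBt
    · rw [← hM'b, hdetM']; exact hd'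
    · rw [← hM''b, hdetM'']; exact hd''
    · rw [← hM'b, ← hM''b, hdetM', hdetM'']; exact hprod
  have hmc2 := hmc.submatrix_equiv e.symm
  have hback : ∀ (X : Matrix (Fin (n+1)) (Fin (n+1)) ℝ),
      (X.submatrix e e).submatrix e.symm e.symm = X := by
    intro X
    rw [Matrix.submatrix_submatrix, Equiv.self_comp_symm, Matrix.submatrix_id_id]
  rw [hM', hM'', hback, hback] at hmc2
  exact matSign_eq_of_mcong hB' hB'' hmc2
end
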